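/- Let L consist of a ternary relation R, a 10-ary relation S and an 11-ary relation U, let f(x) = log₈(x+1), and let r = 8⁹ − 11. Let A be the L-structure with domain {a₁,…,a₁₀, u₁,…,u_r} whose relations are exactly S(a₁,…,a₁₀) and U(a₁,…,a₁₀,u_i) for 1 ≤ i ≤ r. Then: δ(A) = 9; δ(X) ≥ f(|X|) for every X ⊆ A, so A ∈ K_f; for every 9-element subset I of {1,…,10}, cl_A({a_i : i ∈ I}) = A and d^A({a_i : i ∈ I}) = 9 (so the a_i, i ∈ I, are d-independent in A); and for every 8-element subset I of {1,…,10}, {a_i : i ∈ I} ≤ A. -/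

import Mathlib

open FirstOrder Set

namespace MeasureAmalgamation

variable (L : FirstOrder.Language)

/-- The predimension `δ(A) = |A| − Σ_i |R_i[A]|` of a (finite) subset `A` of an
`L`-structure: the number of points minus the number of relation instances inside `A`. -/
noncomputable def delta {N : Type*} [L.Structure N] (A : Set N) : ℤ :=
  (A.ncard : ℤ) -
    (Set.ncard {p : Σ n, L.Relations n × (Fin n → N) |
      (∀ i, p.2.2 i ∈ A) ∧ Language.Structure.RelMap p.2.1 p.2.2} : ℤ)

/-- `A ≤ B` (`A` is self-sufficient in `B`): `A ⊆ B` and `δ(A) < δ(B′)` whenever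
`A ⊊ B′ ⊆ B` with `B′` finite. -/
def SelfSuffIn {N : Type*} [L.Structure N] (A B : Set N) : Prop :=
  A ⊆ B ∧ ∀ B' : Set N, A ⊂ B' → B' ⊆ B → B'.Finite → delta L A < delta L B'

/-- `A ≤ M` for the (possibly infinite) ambient structure:
`A ∩ X ≤ X` for every finite `X ⊆ M`. -/
def SelfSuffM {N : Type*} [L.Structure N] (A : Set N) : Prop :=
  ∀ X : Set N, X.Finite → SelfSuffIn L (A ∩ X) X

/-- The closure `cl_B(X)`: the smallest self-sufficient subset of `B` containing `X`. -/
def clIn {N : Type*} [L.Structure N] (X B : Set N) : Set N :=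
  ⋂₀ {A : Set N | X ⊆ A ∧ SelfSuffIn L A B}

/-- The dimension `d^B(X) = δ(cl_B(X))`. -/
noncomputable def dIn {N : Type*} [L.Structure N] (X B : Set N) : ℤ :=
  delta L (clIn L X B)

/-- The closure `cl_M(X)` in the ambient structure. -/
def clM {N : Type*} [L.Structure N] (X : Set N) : Set N :=
  ⋂₀ {A : Set N | X ⊆ A ∧ SelfSuffM L A}

/-- The dimension `d(X) = δ(cl_M(X))` in the ambient structure. -/
noncomputable def dM {N : Type*} [L.Structure N] (X : Set N) : ℤ :=
  delta L (clM L X)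

/-- Membership in the class `K_f`: every (finite) subset `X` satisfies
`δ(X) ≥ f(|X|)`. -/
def InKf (f : ℝ → ℝ) (B : Type*) [L.Structure B] : Prop :=
  ∀ X : Set B, X.Finite → f X.ncard ≤ (delta L X : ℝ)

/-- `f` is a good function (continuous, increasing, unbounded) certified by the standard
conditions guaranteeing the free amalgamation property for `(K_f, ≤)`: `f` has a
non-increasing right derivative `g` with `g(x) ≤ 1/(x+1)`. -/
structure IsGoodFun (f g : ℝ → ℝ) : Prop where
  cont : ContinuousOn f (Set.Ici 0)
  mono : StrictMonoOn f (Set.Ici 0)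
  unbounded : Filter.Tendsto f Filter.atTop Filter.atTop
  rightDeriv : ∀ x ∈ Set.Ici (0 : ℝ), HasDerivWithinAt f (g x) (Set.Ici x) x
  anti : AntitoneOn g (Set.Ici 0)
  bound : ∀ x ∈ Set.Ici (0 : ℝ), g x ≤ 1 / (x + 1)

/-- Any subset of a structure in a relational language is (the carrier of) a
substructure. -/
def relSub {N : Type*} [L.Structure N] [L.IsRelational] (A : Set N) :
    L.Substructure N where
  carrier := A
  fun_mem := fun {_} f => isEmptyElim f

/-- `N` is the generic structure `M_f` of the amalgamation class `(K_f, ≤)`: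
(1) `N` is the union of a chain of finite self-sufficient substructures, all in `K_f`;
(2) (`≤`-extension property) if `A ≤ N` is finite and `A ≤ B ∈ K_f`, then there is a
`≤`-embedding `β : B → N` fixing `A` pointwise. -/
def IsGeneric {N : Type*} [L.Structure N] [L.IsRelational] (f : ℝ → ℝ) : Prop :=
  (∃ c : ℕ → Set N, Monotone c ∧ (∀ k, (c k).Finite) ∧ (∀ k, SelfSuffM L (c k)) ∧
    (∀ (k : ℕ) (X : Set N), X ⊆ c k → f X.ncard ≤ (delta L X : ℝ)) ∧
    (⋃ k, c k) = Set.univ) ∧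
  (∀ A : Set N, A.Finite → SelfSuffM L A →
    ∀ (B : Type) (_ : Fintype B) (_ : L.Structure B), InKf L f B →
      ∀ e : ↥(relSub L A) ↪[L] B,
        SelfSuffIn L (Set.range ⇑e) (Set.univ : Set B) →
        ∃ g : B ↪[L] N, (∀ a : ↥(relSub L A), g (e a) = ↑a) ∧
          SelfSuffM L (Set.range ⇑g))

/-- Two tuples have the same complete type over `∅`. -/
def sameType {N : Type*} [L.Structure N] {k : ℕ} (a a' : Fin k → N) : Prop :=
  ∀ φ : L.Formula (Fin k), φ.Realize a ↔ φ.Realize a'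

/-- The locus `loc(b̄/ā)`: the set of realizations in `N` of the complete type of `b̄`
over `ā`. -/
def locus {N : Type*} [L.Structure N] {k m : ℕ} (a : Fin k → N) (b : Fin m → N) :
    Set (Fin m → N) :=
  {y | sameType L (Fin.append a y) (Fin.append a b)}

/-- A subset of `M` viewed as a subset of the power `M^{Fin 1}`. -/
def toDef1 (M : Type*) (s : Set M) : Set (Fin 1 → M) := {x | x 0 ∈ s}

/-- Algebraic closure: `b ∈ acl(Z)` iff `b` belongs to some finite `Z`-definable set. -/
def inAcl {M : Type*} [L.Structure M] (Z : Set M) (b : M) : Prop :=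
  ∃ s : Set M, b ∈ s ∧ s.Finite ∧ Z.Definable L (toDef1 M s)


/-- The relations of the example language: a ternary `R`, a 10-ary `S` and an 11-ary
`U`. -/
inductive ExRels : ℕ → Type where
  | R : ExRels 3
  | S : ExRels 10
  | U : ExRels 11

/-- The example language, with relations `R` (ternary), `S` (10-ary), `U` (11-ary). -/
def ExLang : FirstOrder.Language := ⟨fun _ => Empty, ExRels⟩

instance : ExLang.IsRelational := fun _ => inferInstanceAs (IsEmpty Empty)

instance : Finite (Σ n, ExLang.Relations n) := by
  have hsurj : Function.Surjective (fun i : Fin 3 =>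
      (match i with
        | 0 => ⟨3, ExRels.R⟩
        | 1 => ⟨10, ExRels.S⟩
        | 2 => ⟨11, ExRels.U⟩ : Σ n, ExLang.Relations n)) := by
    rintro ⟨n, r⟩
    cases r with
    | R => exact ⟨0, rfl⟩
    | S => exact ⟨1, rfl⟩
    | U => exact ⟨2, rfl⟩
  exact Finite.of_surjective _ hsurj

/-- `r = 8⁹ − 11`. -/
def rBig : ℕ := 8 ^ 9 - 11

/-- The domain of the structure `A`: points `a₁,…,a₁₀` and `u₁,…,u_r`. -/
abbrev ADom : Type := Fin 10 ⊕ Fin rBig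

/-- The structure `A`: its relations are exactly `S(a₁,…,a₁₀)` and `U(a₁,…,a₁₀,uⱼ)` for
`1 ≤ j ≤ r`. -/
instance : ExLang.Structure ADom where
  funMap := fun f => isEmptyElim f
  RelMap := fun {_} rel x =>
    match rel with
    | ExRels.R => False
    | ExRels.S => x = fun i : Fin 10 => Sum.inl i
    | ExRels.U => ∃ j : Fin rBig,
        x = Fin.snoc (fun i : Fin 10 => (Sum.inl i : ADom)) (Sum.inr j)

/-- The good function `f(x) = log₈(x+1)`. -/
noncomputable def fEx : ℝ → ℝ := fun x => Real.logb 8 (x + 1)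
def relSet (X : Set ADom) : Set (Σ n, ExLang.Relations n × (Fin n → ADom)) :=
  {p | (∀ i, p.2.2 i ∈ X) ∧ Language.Structure.RelMap p.2.1 p.2.2}

lemma delta_eq (X : Set ADom) :
    delta ExLang X = (X.ncard : ℤ) - ((relSet X).ncard : ℤ) := rfl

lemma relSet_empty (X : Set ADom) (h : ¬ ∀ i : Fin 10, (Sum.inl i : ADom) ∈ X) :
    relSet X = ∅ := by
  ext ⟨n, r, x⟩
  simp only [Set.mem_empty_iff_false, iff_false]
  rintro ⟨hx, hr⟩
  cases r with
  | R => exact hr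
  | S =>
    refine h fun i => ?_
    have := hx i
    rw [show x = fun i : Fin 10 => (Sum.inl i : ADom) from hr] at this
    exact this
  | U =>
    obtain ⟨j, rfl⟩ := hr
    exact h fun i => by simpa [Fin.snoc_castSucc] using hx i.castSucc

lemma relSet_all (X : Set ADom) (h : ∀ i : Fin 10, (Sum.inl i : ADom) ∈ X) :
    relSet X = insert (⟨10, ExRels.S, fun i : Fin 10 => (Sum.inl i : ADom)⟩ :
        Σ n, ExLang.Relations n × (Fin n → ADom))
      ((fun j : Fin rBig => (⟨11, ExRels.U,
          Fin.snoc (fun i : Fin 10 => (Sum.inl i : ADom)) (Sum.inr j)⟩ :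
        Σ n, ExLang.Relations n × (Fin n → ADom))) '' {j | (Sum.inr j : ADom) ∈ X}) := by
  ext ⟨n, r, x⟩
  cases r with
  | R =>
    simp only [relSet, Set.mem_setOf_eq, Set.mem_insert_iff, Set.mem_image]
    constructor
    · rintro ⟨_, hr⟩; exact hr.elim
    · rintro (heq | ⟨j, _, heq⟩) <;> simp at heq
  | S =>
    simp only [relSet, Set.mem_setOf_eq, Set.mem_insert_iff, Set.mem_image]
    constructor
    · rintro ⟨_, hr⟩
      rw [show x = fun i : Fin 10 => (Sum.inl i : ADom) from hr]
      exact Or.inl rfl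
    · rintro (heq | ⟨j, _, heq⟩)
      · have hx : x = fun i : Fin 10 => (Sum.inl i : ADom) := by
            exact congrArg Prod.snd (eq_of_heq (Sigma.mk.inj_iff.mp heq).2)
        exact ⟨fun i => by rw [hx]; exact h i, hx⟩
      · exact absurd heq (by simp)
  | U =>
    simp only [relSet, Set.mem_setOf_eq, Set.mem_insert_iff, Set.mem_image]
    constructor
    · rintro ⟨hx, j, rfl⟩
      refine Or.inr ⟨j, ?_, rfl⟩
      have := hx (Fin.last 10); rw [Fin.snoc_last] at this; exact this
    · rintro (heq | ⟨j, hj, heq⟩)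
      · exact absurd heq (by simp)
      · have hx : x = Fin.snoc (fun i : Fin 10 => (Sum.inl i : ADom)) (Sum.inr j) := by
          have := heq.symm; exact congrArg Prod.snd (eq_of_heq (Sigma.mk.inj_iff.mp this).2)
        subst hx
        refine ⟨fun i => ?_, j, rfl⟩
        refine Fin.lastCases ?_ ?_ i
        · rw [Fin.snoc_last]; exact hj
        · intro i; simpa [Fin.snoc_castSucc] using h i
lemma ncard_relSet_all (X : Set ADom) (h : ∀ i : Fin 10, (Sum.inl i : ADom) ∈ X) :
    (relSet X).ncard = 1 + {j : Fin rBig | (Sum.inr j : ADom) ∈ X}.ncard := by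
  rw [relSet_all X h]
  have hinj : Function.Injective (fun j : Fin rBig => (⟨11, ExRels.U,
      Fin.snoc (fun i : Fin 10 => (Sum.inl i : ADom)) (Sum.inr j)⟩ :
        Σ n, ExLang.Relations n × (Fin n → ADom))) := by
    intro a b hab
    have : (Fin.snoc (fun i : Fin 10 => (Sum.inl i : ADom)) (Sum.inr a) : Fin 11 → ADom)
        = Fin.snoc (fun i : Fin 10 => (Sum.inl i : ADom)) (Sum.inr b) := by
      exact congrArg Prod.snd (eq_of_heq (Sigma.mk.inj_iff.mp hab).2)
    have := congrFun this (Fin.last 10)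
    rw [Fin.snoc_last, Fin.snoc_last] at this; exact Sum.inr_injective this
  have hnot : (⟨10, ExRels.S, fun i : Fin 10 => (Sum.inl i : ADom)⟩ :
      Σ n, ExLang.Relations n × (Fin n → ADom)) ∉
      ((fun j : Fin rBig => (⟨11, ExRels.U,
          Fin.snoc (fun i : Fin 10 => (Sum.inl i : ADom)) (Sum.inr j)⟩ :
        Σ n, ExLang.Relations n × (Fin n → ADom))) '' {j | (Sum.inr j : ADom) ∈ X}) := by
    rintro ⟨j, -, heq⟩
    exact absurd heq (by simp)
  rw [Set.ncard_insert_of_notMem hnot ((Set.toFinite _).image _),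
    Set.ncard_image_of_injective _ hinj]
  omega

lemma ncard_split (X : Set ADom) :
    X.ncard = {i : Fin 10 | (Sum.inl i : ADom) ∈ X}.ncard
      + {j : Fin rBig | (Sum.inr j : ADom) ∈ X}.ncard := by
  have hX : X = Sum.inl '' {i : Fin 10 | (Sum.inl i : ADom) ∈ X}
      ∪ Sum.inr '' {j : Fin rBig | (Sum.inr j : ADom) ∈ X} := by
    ext x; cases x <;> simp
  conv_lhs => rw [hX]
  rw [Set.ncard_union_eq (by
      rw [Set.disjoint_left]; rintro a ⟨i, -, rfl⟩ ⟨j, -, hj⟩; exact Sum.inl_ne_inr hj.symm)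
    ((Set.toFinite _).image _) ((Set.toFinite _).image _),
    Set.ncard_image_of_injective _ Sum.inl_injective,
    Set.ncard_image_of_injective _ Sum.inr_injective]

lemma delta_of_all (X : Set ADom) (h : ∀ i : Fin 10, (Sum.inl i : ADom) ∈ X) :
    delta ExLang X = 9 := by
  have h1 : {i : Fin 10 | (Sum.inl i : ADom) ∈ X} = univ := eq_univ_of_forall h
  have h2 := ncard_split X
  rw [h1, Set.ncard_univ] at h2
  simp only [Nat.card_eq_fintype_card, Fintype.card_fin] at h2
  rw [delta_eq, h2, ncard_relSet_all X h]
  push_cast; ring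

lemma delta_of_not_all (X : Set ADom) (h : ¬ ∀ i : Fin 10, (Sum.inl i : ADom) ∈ X) :
    delta ExLang X = X.ncard := by
  rw [delta_eq, relSet_empty X h]
  simp
lemma delta_univ : delta ExLang (univ : Set ADom) = 9 :=
  delta_of_all _ fun _ => trivial

lemma ncard_le_total (X : Set ADom) : X.ncard ≤ 10 + rBig := by
  have h := Set.ncard_le_ncard (subset_univ X) finite_univ
  rwa [Set.ncard_univ, Nat.card_eq_fintype_card, Fintype.card_sum, Fintype.card_fin,
    Fintype.card_fin] at h

lemma fEx_le_nat (n : ℕ) : fEx n ≤ n := by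
  rw [fEx, Real.logb_le_iff_le_rpow (by norm_num) (by positivity), Real.rpow_natCast]
  calc (n : ℝ) + 1 ≤ 2 ^ n := by exact_mod_cast Nat.lt_two_pow_self (n := n)
  _ ≤ 8 ^ n := by gcongr <;> norm_num

lemma fEx_le_nine (n : ℕ) (hn : n ≤ 10 + rBig) : fEx n ≤ 9 := by
  rw [fEx, Real.logb_le_iff_le_rpow (by norm_num) (by positivity)]
  have h8 : (8 : ℝ) ^ (9 : ℝ) = 134217728 := by
    rw [show (9 : ℝ) = ((9 : ℕ) : ℝ) by norm_num, Real.rpow_natCast]; norm_num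
  rw [h8]
  have hr : rBig = 134217717 := by norm_num [rBig]
  rw [hr] at hn
  have : n + 1 ≤ 134217728 := by omega
  exact_mod_cast this

lemma kf_bound (X : Set ADom) : fEx X.ncard ≤ (delta ExLang X : ℝ) := by
  by_cases h : ∀ i : Fin 10, (Sum.inl i : ADom) ∈ X
  · rw [delta_of_all X h]
    exact (fEx_le_nine _ (ncard_le_total X)).trans_eq (by norm_num)
  · rw [delta_of_not_all X h]
    exact (fEx_le_nat _).trans_eq (by push_cast; ring)

lemma ncard_image_I (I : Finset (Fin 10)) :
    ((fun i : Fin 10 => (Sum.inl i : ADom)) '' ↑I).ncard = I.card := by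
  rw [Set.ncard_image_of_injective _ (fun a b hab => Sum.inl.inj hab), Set.ncard_coe_finset]

lemma delta_image (I : Finset (Fin 10)) (hlt : I.card < 10) :
    delta ExLang ((fun i : Fin 10 => (Sum.inl i : ADom)) '' ↑I) = I.card := by
  have hnot : ¬ ∀ i : Fin 10, (Sum.inl i : ADom) ∈
      (fun i : Fin 10 => (Sum.inl i : ADom)) '' ↑I := by
    intro hall
    have : I = Finset.univ := by
      rw [Finset.eq_univ_iff_forall]
      intro i
      obtain ⟨i', hi', heq⟩ := hall i
      rwa [show i' = i from Sum.inl.inj heq] at hi'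
    rw [this] at hlt; simp at hlt
  rw [delta_of_not_all _ hnot, ncard_image_I]

lemma selfSuff_image (I : Finset (Fin 10)) (hI : I.card ≤ 8) :
    SelfSuffIn ExLang ((fun i : Fin 10 => (Sum.inl i : ADom)) '' ↑I) univ := by
  refine ⟨subset_univ _, fun B' hss _ hfin => ?_⟩
  rw [delta_image I (by omega)]
  by_cases h : ∀ i : Fin 10, (Sum.inl i : ADom) ∈ B'
  · rw [delta_of_all B' h]; exact_mod_cast by omega
  · rw [delta_of_not_all B' h]
    have h1 := Set.ncard_lt_ncard hss hfin
    rw [ncard_image_I] at h1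
    exact_mod_cast h1

lemma selfSuff_set_eq (I : Finset (Fin 10)) (h9 : I.card = 9) :
    {A : Set ADom | (fun i : Fin 10 => (Sum.inl i : ADom)) '' ↑I ⊆ A ∧
      SelfSuffIn ExLang A univ} = {univ} := by
  ext A'
  simp only [Set.mem_setOf_eq, Set.mem_singleton_iff]
  constructor
  · rintro ⟨hsub, -, hss⟩
    by_contra hne
    have hlt := hss univ (ssubset_univ_iff.mpr hne) subset_rfl finite_univ
    rw [delta_univ] at hlt
    by_cases h : ∀ i : Fin 10, (Sum.inl i : ADom) ∈ A'
    · rw [delta_of_all A' h] at hlt; exact lt_irrefl _ hlt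
    · rw [delta_of_not_all A' h] at hlt
      have h2 := Set.ncard_le_ncard hsub (Set.toFinite A')
      rw [ncard_image_I, h9] at h2
      have : (9 : ℤ) ≤ A'.ncard := by exact_mod_cast h2
      omega
  · rintro rfl
    exact ⟨subset_univ _, subset_rfl, fun B' h1 h2 _ => absurd h2 h1.2⟩

/-- **Properties of the structure `A` in Theorem 4.7**: `δ(A) = 9`; `δ(X) ≥ f(|X|)` for
all `X ⊆ A`, so `A ∈ K_f`; each 9-subset of `{a₁,…,a₁₀}` is `d`-independent with closure
all of `A`; and each 8-subset of `{a₁,…,a₁₀}` is self-sufficient in `A`. -/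
theorem exampleStructure_properties :
    delta ExLang (Set.univ : Set ADom) = 9 ∧
    (∀ X : Set ADom, fEx X.ncard ≤ (delta ExLang X : ℝ)) ∧
    InKf ExLang fEx ADom ∧
    (∀ I : Finset (Fin 10), I.card = 9 →
      clIn ExLang ((fun i : Fin 10 => (Sum.inl i : ADom)) '' ↑I)
          (Set.univ : Set ADom) = Set.univ ∧
      dIn ExLang ((fun i : Fin 10 => (Sum.inl i : ADom)) '' ↑I)
          (Set.univ : Set ADom) = 9) ∧
    (∀ I : Finset (Fin 10), I.card = 8 →
      SelfSuffIn ExLang ((fun i : Fin 10 => (Sum.inl i : ADom)) '' ↑I)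
        (Set.univ : Set ADom)) := by
  have hcl : ∀ I : Finset (Fin 10), I.card = 9 →
      clIn ExLang ((fun i : Fin 10 => (Sum.inl i : ADom)) '' ↑I)
        (Set.univ : Set ADom) = Set.univ := by
    intro I h9
    unfold clIn
    rw [selfSuff_set_eq I h9, Set.sInter_singleton]
  refine ⟨delta_univ, kf_bound, fun X _ => kf_bound X, fun I h9 => ⟨hcl I h9, ?_⟩,
    fun I h8 => selfSuff_image I (le_of_eq h8)⟩
  unfold dIn
  rw [hcl I h9]
  exact delta_univ

end MeasureAmalgamation
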